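/- Let x, x' ∈ Σ_q^n with supp(x−x') = {i_1 < i_2 < ⋯ < i_d}, d ≥ 2, and set i_0 = 0 and i_{d+1} = n+1; let 0 = j_0 < j_1 < ⋯ < j_m = n be the right endpoints of the runs of x and 0 = j'_0 < j'_1 < ⋯ < j'_{m'} = n the right endpoints of the runs of x'. Fix λ, λ' ∈ [d] with λ ≤ λ', and let S = |supp(x−x') ∖ [i_λ, i_{λ'}]| and Δ' = |{i ∈ [i_λ, i_{λ'}−1] : x_i ≠ x'_{i+1}}|. Then: (a) if d' < S + Δ', there is no pair (j_i, j'_{i'}) with i_{λ−1} < j'_{i'} ≤ i_λ ≤ i_{λ'} ≤ j_i < i_{λ'+1} and d_H(x_{[n]∖{j_i}}, x'_{[n]∖{j'_{i'}}}) = d'; and (b) if d' ≥ S + Δ', the number of pairs (j_i, j'_{i'}) with i_{λ−1} < j'_{i'} ≤ i_λ ≤ i_{λ'} ≤ j_i < i_{λ'+1} and d_H(x_{[n]∖{j_i}}, x'_{[n]∖{j'_{i'}}}) = d' is at most d' − S − Δ' + 1. -/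

import Mathlib

/-- Sequences of length `n` are modelled as functions `ℕ → Fin q` whose relevant
positions are `1, …, n` (1-based, as in the paper). `delN x j` deletes position `j`. -/
def delN {q : ℕ} (x : ℕ → Fin q) (j : ℕ) : ℕ → Fin q :=
  fun i => if i < j then x i else x (i + 1)

/-- Hamming distance between two length-`n` sequences (positions `1, …, n`). -/
def hdist {q : ℕ} (n : ℕ) (u v : ℕ → Fin q) : ℕ :=
  ((Finset.Icc 1 n).filter fun i => u i ≠ v i).card

/-- `j 0 = 0 < j 1 < ⋯ < j m = n` are the right endpoints of the runs of `x`. -/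
def IsRunDecomp {q : ℕ} (n m : ℕ) (x : ℕ → Fin q) (j : ℕ → ℕ) : Prop :=
  j 0 = 0 ∧ j m = n ∧ (∀ i, i < m → j i < j (i + 1)) ∧
  (∀ i, 1 ≤ i → i ≤ m → ∀ a b, j (i - 1) + 1 ≤ a → a ≤ j i →
      j (i - 1) + 1 ≤ b → b ≤ j i → x a = x b) ∧
  (∀ i, 1 ≤ i → i < m → x (j i) ≠ x (j i + 1))

def cnt1 {q : ℕ} (x x' : ℕ → Fin q) (lo hi : ℕ) : ℕ :=
  ((Finset.Icc lo hi).filter fun i => x i ≠ x' i).card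

def cnt2 {q : ℕ} (x x' : ℕ → Fin q) (lo hi : ℕ) : ℕ :=
  ((Finset.Icc lo hi).filter fun i => x i ≠ x' (i + 1)).card

lemma monoAux {m : ℕ} {j : ℕ → ℕ} (h : ∀ i, i < m → j i < j (i+1)) :
    ∀ s t, s < t → t ≤ m → j s < j t := by
  intro s t hst htm
  induction t with
  | zero => omega
  | succ t ih =>
    rcases Nat.lt_or_ge s t with h1 | h1
    · exact lt_trans (ih (by omega) (by omega)) (h t (by omega))
    · have hs : s = t := by omega
      subst hs
      exact h s (by omega)

lemma card_filter_lt {α : Type*} {s t : Finset α} (p : α → Prop) [DecidablePred p]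
    (hsub : s ⊆ t) {w : α} (hw : w ∈ t) (hws : w ∉ s) (hpw : p w) :
    (s.filter p).card < (t.filter p).card := by
  apply Finset.card_lt_card
  rw [Finset.ssubset_iff_of_subset (Finset.filter_subset_filter p hsub)]
  exact ⟨w, Finset.mem_filter.mpr ⟨hw, hpw⟩, fun h => hws (Finset.mem_of_mem_filter _ h)⟩

lemma hdist_split {q : ℕ} (n : ℕ) (x x' : ℕ → Fin q) (a b : ℕ)
    (hb : 1 ≤ b) (hba : b ≤ a) (han : a ≤ n) :
    hdist (n-1) (delN x a) (delN x' b) =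
      cnt1 x x' 1 (b-1) + cnt2 x x' b (a-1) + cnt1 x x' (a+1) n := by
  unfold hdist cnt1 cnt2
  have hsplit : Finset.Icc 1 (n-1)
      = (Finset.Icc 1 (b-1) ∪ Finset.Icc b (a-1)) ∪ Finset.Icc a (n-1) := by
    ext k; simp only [Finset.mem_Icc, Finset.mem_union]; omega
  have hd : Disjoint (Finset.Icc 1 (b-1) ∪ Finset.Icc b (a-1)) (Finset.Icc a (n-1)) := by
    rw [Finset.disjoint_left]; intro k hk1 hk2
    simp only [Finset.mem_Icc, Finset.mem_union] at hk1 hk2; omega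
  have hd' : Disjoint (Finset.Icc 1 (b-1)) (Finset.Icc b (a-1)) := by
    rw [Finset.disjoint_left]; intro k hk1 hk2
    simp only [Finset.mem_Icc] at hk1 hk2; omega
  rw [hsplit, Finset.filter_union,
      Finset.card_union_of_disjoint (Finset.disjoint_filter_filter hd),
      Finset.filter_union,
      Finset.card_union_of_disjoint (Finset.disjoint_filter_filter hd')]
  have e1 : (Finset.Icc 1 (b-1)).filter (fun i => delN x a i ≠ delN x' b i)
      = (Finset.Icc 1 (b-1)).filter (fun i => x i ≠ x' i) := by
    apply Finset.filter_congr
    intro i hi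
    simp only [Finset.mem_Icc] at hi
    have h1 : i < b := by omega
    have h2 : i < a := by omega
    simp only [delN, if_pos h1, if_pos h2]
  have e2 : (Finset.Icc b (a-1)).filter (fun i => delN x a i ≠ delN x' b i)
      = (Finset.Icc b (a-1)).filter (fun i => x i ≠ x' (i+1)) := by
    apply Finset.filter_congr
    intro i hi
    simp only [Finset.mem_Icc] at hi
    have h1 : ¬ i < b := by omega
    have h2 : i < a := by omega
    simp only [delN, if_neg h1, if_pos h2]
  have e3 : (Finset.Icc a (n-1)).filter (fun i => delN x a i ≠ delN x' b i)
      = (Finset.Icc a (n-1)).filter (fun i => x (i+1) ≠ x' (i+1)) := by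
    apply Finset.filter_congr
    intro i hi
    simp only [Finset.mem_Icc] at hi
    have h1 : ¬ i < b := by omega
    have h2 : ¬ i < a := by omega
    simp only [delN, if_neg h1, if_neg h2]
  have himg : ((Finset.Icc (a+1) n).filter fun i => x i ≠ x' i)
      = Finset.image (· + 1) ((Finset.Icc a (n-1)).filter fun i => x (i+1) ≠ x' (i+1)) := by
    ext k
    simp only [Finset.mem_filter, Finset.mem_Icc, Finset.mem_image]
    constructor
    · rintro ⟨⟨hk1, hk2⟩, hk3⟩
      refine ⟨k - 1, ⟨⟨by omega, by omega⟩, ?_⟩, by omega⟩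
      have hkk : k - 1 + 1 = k := by omega
      rw [hkk]; exact hk3
    · rintro ⟨i, ⟨⟨hi1, hi2⟩, hi3⟩, rfl⟩
      exact ⟨⟨by omega, by omega⟩, hi3⟩
  rw [e1, e2, e3, himg, Finset.card_image_of_injective _ (add_left_injective 1)]

/-- Here `e` enumerates the support: `e 0 = 0 = i₀`, `e (d+1) = n+1 = i_{d+1}`,
`e` is strictly increasing on `{0, …, d+1}`, and
`supp(x − x') = {e 1 < e 2 < ⋯ < e d}`.  With `S = |supp(x − x') ∖ [i_λ, i_{λ'}]|` and
`Δ' = |{i ∈ [i_λ, i_{λ'}−1] : x_i ≠ x'_{i+1}}|`: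
(a) if `d' < S + Δ'` there is no pair of run endpoints `(j_i, j'_{i'})` with
`i_{λ−1} < j'_{i'} ≤ i_λ ≤ i_{λ'} ≤ j_i < i_{λ'+1}` and
`d_H(x_{[n]∖{j_i}}, x'_{[n]∖{j'_{i'}}}) = d'`; and
(b) if `d' ≥ S + Δ'` there are at most `d' − S − Δ' + 1` such pairs. -/
theorem stmt14 (q n m m' d : ℕ) (hq : 2 ≤ q) (hd : 2 ≤ d)
    (x x' : ℕ → Fin q) (e : ℕ → ℕ)
    (he0 : e 0 = 0) (hetop : e (d + 1) = n + 1)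
    (hemono : ∀ a b, a < b → b ≤ d + 1 → e a < e b)
    (hsupp : ((Finset.Icc 1 n).filter fun k => x k ≠ x' k) = (Finset.Icc 1 d).image e)
    (j j' : ℕ → ℕ)
    (hx : IsRunDecomp n m x j) (hx' : IsRunDecomp n m' x' j')
    (lam lam' : ℕ) (hlam1 : 1 ≤ lam) (hlamle : lam ≤ lam') (hlam'd : lam' ≤ d)
    (S Δ' : ℕ)
    (hS : S = (((Finset.Icc 1 n).filter fun k => x k ≠ x' k) \
        Finset.Icc (e lam) (e lam')).card)
    (hΔ' : Δ' = ((Finset.Icc (e lam) (e lam' - 1)).filter fun i => x i ≠ x' (i + 1)).card)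
    (d' : ℕ) :
    (d' < S + Δ' →
      (Finset.Icc 1 m ×ˢ Finset.Icc 1 m').filter (fun p =>
        e (lam - 1) < j' p.2 ∧ j' p.2 ≤ e lam ∧ e lam' ≤ j p.1 ∧ j p.1 < e (lam' + 1) ∧
        hdist (n - 1) (delN x (j p.1)) (delN x' (j' p.2)) = d') = ∅) ∧
    (S + Δ' ≤ d' →
      ((Finset.Icc 1 m ×ˢ Finset.Icc 1 m').filter fun p =>
        e (lam - 1) < j' p.2 ∧ j' p.2 ≤ e lam ∧ e lam' ≤ j p.1 ∧ j p.1 < e (lam' + 1) ∧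
        hdist (n - 1) (delN x (j p.1)) (delN x' (j' p.2)) = d').card
          ≤ d' - S - Δ' + 1) := by
  obtain ⟨hj0, hjm, hjmono, hjrun, hjne⟩ := hx
  obtain ⟨hj'0, hj'm, hj'mono, hj'run, hj'ne⟩ := hx'
  have hjm' := monoAux hjmono
  have hj'm' := monoAux hj'mono
  have hemle : ∀ s t, s ≤ t → t ≤ d + 1 → e s ≤ e t := by
    intro s t h1 h2
    rcases Nat.eq_or_lt_of_le h1 with h | h
    · rw [h]
    · exact (hemono s t h h2).le
  have helam1 : 1 ≤ e lam := by
    have := hemono 0 lam (by omega) (by omega); omega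
  have helamlam' : e lam ≤ e lam' := hemle lam lam' hlamle (by omega)
  have helam'n : e lam' ≤ n := by
    have := hemono lam' (d+1) (by omega) (by omega); omega
  have helamn : e lam ≤ n := le_trans helamlam' helam'n
  have heup : e (lam'+1) ≤ n + 1 := by
    have := hemle (lam'+1) (d+1) (by omega) (by omega); omega
  have hsup : ∀ k, 1 ≤ k → k ≤ n → x k ≠ x' k → ∃ t, 1 ≤ t ∧ t ≤ d ∧ e t = k := by
    intro k h1 h2 h3
    have hk : k ∈ (Finset.Icc 1 n).filter fun k => x k ≠ x' k := by
      simp only [Finset.mem_filter, Finset.mem_Icc]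
      exact ⟨⟨h1, h2⟩, h3⟩
    rw [hsupp] at hk
    simp only [Finset.mem_image, Finset.mem_Icc] at hk
    obtain ⟨t, ⟨ht1, ht2⟩, ht3⟩ := hk
    exact ⟨t, ht1, ht2, ht3⟩
  have hltlam : ∀ t, 1 ≤ t → t ≤ d → e t < e lam → e t ≤ e (lam - 1) := by
    intro t h1 h2 h3
    have ht : t < lam := by
      by_contra hc; push_neg at hc
      exact absurd (hemle lam t hc (by omega)) (by omega)
    exact hemle t (lam-1) (by omega) (by omega)
  have hgtlam' : ∀ t, 1 ≤ t → t ≤ d → e lam' < e t → e (lam'+1) ≤ e t := by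
    intro t h1 h2 h3
    have ht : lam' < t := by
      by_contra hc; push_neg at hc
      exact absurd (hemle t lam' hc (by omega)) (by omega)
    exact hemle (lam'+1) t (by omega) (by omega)
  have hns1 : ∀ k, e (lam-1) < k → k < e lam → x k = x' k := by
    intro k h1 h2
    by_contra hne
    obtain ⟨t, ht1, ht2, rfl⟩ := hsup k (by omega) (by omega) hne
    have := hltlam t ht1 ht2 h2; omega
  have hns2 : ∀ k, e lam' < k → k < e (lam'+1) → x k = x' k := by
    intro k h1 h2
    by_contra hne
    obtain ⟨t, ht1, ht2, rfl⟩ := hsup k (by omega) (by omega) hne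
    have := hgtlam' t ht1 ht2 h1; omega
  -- main facts about any candidate pair
  have hfacts : ∀ a b : ℕ, e (lam - 1) < b → b ≤ e lam → e lam' ≤ a → a < e (lam' + 1) →
      (hdist (n-1) (delN x a) (delN x' b)
          = cnt1 x x' 1 (b-1) + cnt2 x x' b (a-1) + cnt1 x x' (a+1) n
        ∧ S ≤ cnt1 x x' 1 (b-1) + cnt1 x x' (a+1) n
        ∧ Δ' ≤ cnt2 x x' (e lam) (a-1)
        ∧ cnt2 x x' (e lam) (a-1) ≤ cnt2 x x' b (a-1)) := by
    intro a b hb1 hb2 ha1 ha2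
    have hbge1 : 1 ≤ b := by omega
    have hba : b ≤ a := by omega
    have han : a ≤ n := by omega
    refine ⟨hdist_split n x x' a b hbge1 hba han, ?_, ?_, ?_⟩
    · rw [hS]
      have hsubS : (((Finset.Icc 1 n).filter fun k => x k ≠ x' k) \
            Finset.Icc (e lam) (e lam'))
          ⊆ ((Finset.Icc 1 (b-1)).filter fun i => x i ≠ x' i)
            ∪ ((Finset.Icc (a+1) n).filter fun i => x i ≠ x' i) := by
        intro k hk
        simp only [Finset.mem_sdiff, Finset.mem_filter, Finset.mem_Icc,
          Finset.mem_union, not_and, not_le] at hk ⊢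
        obtain ⟨⟨⟨hk1, hk2⟩, hk3⟩, hk4⟩ := hk
        obtain ⟨t, ht1, ht2, rfl⟩ := hsup k hk1 hk2 hk3
        rcases (by omega : e t < e lam ∨ e lam' < e t) with h | h
        · have := hltlam t ht1 ht2 h
          exact Or.inl ⟨⟨hk1, by omega⟩, hk3⟩
        · have := hgtlam' t ht1 ht2 h
          exact Or.inr ⟨⟨by omega, hk2⟩, hk3⟩
      have hdisj : Disjoint ((Finset.Icc 1 (b-1)).filter fun i => x i ≠ x' i)
          ((Finset.Icc (a+1) n).filter fun i => x i ≠ x' i) := by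
        apply Finset.disjoint_filter_filter
        rw [Finset.disjoint_left]
        intro k h1 h2
        simp only [Finset.mem_Icc] at h1 h2; omega
      calc (((Finset.Icc 1 n).filter fun k => x k ≠ x' k) \
            Finset.Icc (e lam) (e lam')).card
          ≤ (((Finset.Icc 1 (b-1)).filter fun i => x i ≠ x' i)
            ∪ ((Finset.Icc (a+1) n).filter fun i => x i ≠ x' i)).card :=
            Finset.card_le_card hsubS
        _ = cnt1 x x' 1 (b-1) + cnt1 x x' (a+1) n :=
            Finset.card_union_of_disjoint hdisj
    · rw [hΔ']
      unfold cnt2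
      exact Finset.card_le_card (Finset.filter_subset_filter _
        (Finset.Icc_subset_Icc le_rfl (by omega)))
    · unfold cnt2
      exact Finset.card_le_card (Finset.filter_subset_filter _
        (Finset.Icc_subset_Icc (by omega) le_rfl))
  -- strict monotonicity in a
  have hstrictA : ∀ s t : ℕ, 1 ≤ s → s ≤ m →
      e lam' ≤ j s → j t < e (lam' + 1) → j s < j t →
      cnt2 x x' (e lam) (j s - 1) < cnt2 x x' (e lam) (j t - 1) := by
    intro s t hs1 hs2 hjs hjt hlt
    have hjtn : j t ≤ n := by omega
    have hsm : s < m := by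
      rcases Nat.eq_or_lt_of_le hs2 with h | h
      · exfalso
        have : j s = n := by rw [h, hjm]
        omega
      · exact h
    have hxne : x (j s) ≠ x (j s + 1) := hjne s hs1 hsm
    have hxeq : x (j s + 1) = x' (j s + 1) := hns2 (j s + 1) (by omega) (by omega)
    unfold cnt2
    refine card_filter_lt (p := fun i => x i ≠ x' (i+1)) (w := j s)
      (Finset.Icc_subset_Icc le_rfl (by omega))
      (Finset.mem_Icc.mpr ⟨by omega, by omega⟩) ?_ ?_
    · intro hmem
      rw [Finset.mem_Icc] at hmem
      omega
    · show x (j s) ≠ x' (j s + 1)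
      rw [← hxeq]; exact hxne
  -- strict monotonicity in b (with the first count included)
  have hstrictB : ∀ s t : ℕ, 1 ≤ s → s ≤ m' →
      e (lam - 1) < j' s → j' t ≤ e lam → j' s < j' t → ∀ a, e lam' ≤ a →
      cnt1 x x' 1 (j' t - 1) + cnt2 x x' (j' t) (a-1)
        < cnt1 x x' 1 (j' s - 1) + cnt2 x x' (j' s) (a-1) := by
    intro s t hs1 hs2 hjs hjt hlt a ha
    have hj'tn : j' t ≤ n := by omega
    have hsm : s < m' := by
      rcases Nat.eq_or_lt_of_le hs2 with h | h
      · exfalso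
        have : j' s = n := by rw [h, hj'm]
        omega
      · exact h
    have hA : cnt1 x x' 1 (j' t - 1) = cnt1 x x' 1 (j' s - 1) := by
      unfold cnt1
      apply congrArg Finset.card
      ext k
      simp only [Finset.mem_filter, Finset.mem_Icc]
      constructor
      · rintro ⟨⟨h1, h2⟩, h3⟩
        refine ⟨⟨h1, ?_⟩, h3⟩
        by_contra hc; push_neg at hc
        exact h3 (hns1 k (by omega) (by omega))
      · rintro ⟨⟨h1, h2⟩, h3⟩
        exact ⟨⟨h1, by omega⟩, h3⟩
    have hB : cnt2 x x' (j' t) (a-1) < cnt2 x x' (j' s) (a-1) := by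
      have hxeq : x (j' s) = x' (j' s) := hns1 (j' s) (by omega) (by omega)
      have hxne : x' (j' s) ≠ x' (j' s + 1) := hj'ne s hs1 hsm
      unfold cnt2
      refine card_filter_lt (p := fun i => x i ≠ x' (i+1)) (w := j' s)
        (Finset.Icc_subset_Icc (by omega) le_rfl)
        (Finset.mem_Icc.mpr ⟨le_rfl, by omega⟩) ?_ ?_
      · intro hmem
        rw [Finset.mem_Icc] at hmem
        omega
      · show x (j' s) ≠ x' (j' s + 1)
        rw [hxeq]; exact hxne
    omega
  constructor
  · -- part (a)
    intro hlt
    rw [Finset.eq_empty_iff_forall_notMem]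
    intro p hp
    simp only [Finset.mem_filter, Finset.mem_product, Finset.mem_Icc] at hp
    obtain ⟨⟨⟨hp11, hp12⟩, hp21, hp22⟩, h1, h2, h3, h4, h5⟩ := hp
    obtain ⟨hsplit, hSle, hΔle, hφle⟩ := hfacts (j p.1) (j' p.2) h1 h2 h3 h4
    rw [h5] at hsplit
    omega
  · -- part (b)
    intro hge
    have hcard : (Finset.Icc Δ' (d' - S)).card = d' - S - Δ' + 1 := by
      rw [Nat.card_Icc]
      omega
    rw [← hcard]
    apply Finset.card_le_card_of_injOn (fun p => cnt2 x x' (e lam) (j p.1 - 1))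
    · intro p hp
      simp only [Finset.mem_coe, Finset.mem_filter, Finset.mem_product, Finset.mem_Icc] at hp
      obtain ⟨⟨⟨hp11, hp12⟩, hp21, hp22⟩, h1, h2, h3, h4, h5⟩ := hp
      obtain ⟨hsplit, hSle, hΔle, hφle⟩ := hfacts (j p.1) (j' p.2) h1 h2 h3 h4
      rw [h5] at hsplit
      simp only [Finset.mem_coe, Finset.mem_Icc]
      omega
    · intro p1 hp1 p2 hp2 heq
      rw [Finset.mem_coe, Finset.mem_filter, Finset.mem_product] at hp1 hp2
      simp only [Finset.mem_Icc] at hp1 hp2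
      obtain ⟨⟨⟨ha11, ha12⟩, ha21, ha22⟩, g1, g2, g3, g4, g5⟩ := hp1
      obtain ⟨⟨⟨hb11, hb12⟩, hb21, hb22⟩, k1, k2, k3, k4, k5⟩ := hp2
      simp only at heq
      have hj1 : j p1.1 = j p2.1 := by
        rcases lt_trichotomy (j p1.1) (j p2.1) with h | h | h
        · exact absurd heq (Nat.ne_of_lt (hstrictA p1.1 p2.1 ha11 ha12 g3 k4 h))
        · exact h
        · exact absurd heq.symm (Nat.ne_of_lt (hstrictA p2.1 p1.1 hb11 hb12 k3 g4 h))
      have hp1eq : p1.1 = p2.1 := by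
        rcases lt_trichotomy p1.1 p2.1 with h | h | h
        · have := hjm' p1.1 p2.1 h (by omega); omega
        · exact h
        · have := hjm' p2.1 p1.1 h (by omega); omega
      obtain ⟨hsplit1, hSle1, hΔle1, hφle1⟩ := hfacts (j p1.1) (j' p1.2) g1 g2 g3 g4
      obtain ⟨hsplit2, hSle2, hΔle2, hφle2⟩ := hfacts (j p2.1) (j' p2.2) k1 k2 k3 k4
      rw [g5] at hsplit1
      rw [k5] at hsplit2
      rw [hj1] at hsplit1
      have hj2 : j' p1.2 = j' p2.2 := by
        rcases lt_trichotomy (j' p1.2) (j' p2.2) with h | h | h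
        · have := hstrictB p1.2 p2.2 ha21 ha22 g1 k2 h (j p2.1) k3
          omega
        · exact h
        · have := hstrictB p2.2 p1.2 hb21 hb22 k1 g2 h (j p2.1) k3
          omega
      have hp2eq : p1.2 = p2.2 := by
        rcases lt_trichotomy p1.2 p2.2 with h | h | h
        · have := hj'm' p1.2 p2.2 h (by omega); omega
        · exact h
        · have := hj'm' p2.2 p1.2 h (by omega); omega
      exact Prod.ext hp1eq hp2eq
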